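/- For any probability vectors a, b on the leaves of a weighted rooted tree, the tree-Wasserstein distance satisfies the dual-type bound: ‖diag(w) B (a − b)‖₁ = max over vectors s ∈ {−1, 0, 1}^N of sᵀ diag(w) B (a − b), and consequently W_T(μ,ν) equals the supremum of Σᵢ f(xᵢ)(aᵢ − bᵢ) over functions f on the leaves that are 1-Lipschitz with respect to the tree metric d_T and vanish at a fixed basepoint. -/

import Mathlib

/-- A finite rooted tree on `Fin N`, given by a parent function, with a nonnegative
weight on the edge connecting each node to its parent. -/
structure WTree (N : ℕ) where
  parent : Fin N → Fin N
  root : Fin N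
  w : Fin N → ℝ
  hw : ∀ k, 0 ≤ w k
  parent_root : parent root = root
  depth : Fin N → ℕ
  depth_root : depth root = 0
  depth_parent : ∀ v, v ≠ root → depth v = depth (parent v) + 1
  root_unique : ∀ v, depth v = 0 → v = root

/-- `T.anc i k` : node `k` is an ancestor of node `i` (including `i` itself). -/
def WTree.anc {N : ℕ} (T : WTree N) (i k : Fin N) : Prop :=
  ∃ m : ℕ, T.parent^[m] i = k

/-- A leaf is a node with no children. -/
def WTree.IsLeaf {N : ℕ} (T : WTree N) (i : Fin N) : Prop :=
  ∀ v, T.parent v = i → v = i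

open Classical in
/-- The 0/1 ancestor-indicator vector `bᵢ` of node `i`. -/
noncomputable def WTree.bvec {N : ℕ} (T : WTree N) (i : Fin N) : Fin N → ℝ :=
  fun k => if T.anc i k then 1 else 0

open Classical in
/-- The (unique-path) shortest-path distance on the weighted tree: the sum of the
weights of the edges on the path between `i` and `j`, i.e. the sum of weights over
the symmetric difference of the ancestor sets. -/
noncomputable def WTree.dist {N : ℕ} (T : WTree N) (i j : Fin N) : ℝ :=
  ∑ k, if (T.anc i k ∧ ¬ T.anc j k) ∨ (T.anc j k ∧ ¬ T.anc i k) then T.w k else 0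

namespace WTree

open Classical

variable {N : ℕ} (T : WTree N)

lemma anc_refl (i : Fin N) : T.anc i i := ⟨0, rfl⟩

lemma anc_of_parent {v k : Fin N} (h : T.anc (T.parent v) k) : T.anc v k := by
  obtain ⟨m, hm⟩ := h
  exact ⟨m + 1, by rwa [Function.iterate_succ_apply]⟩

lemma anc_iff (v k : Fin N) : T.anc v k ↔ k = v ∨ T.anc (T.parent v) k := by
  constructor
  · rintro ⟨m, hm⟩
    cases m with
    | zero => exact Or.inl hm.symm
    | succ n => exact Or.inr ⟨n, by rwa [Function.iterate_succ_apply] at hm⟩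
  · rintro (rfl | h)
    · exact T.anc_refl k
    · exact T.anc_of_parent h

lemma depth_parent_le (v : Fin N) : T.depth (T.parent v) ≤ T.depth v := by
  by_cases h : v = T.root
  · subst h; rw [T.parent_root]
  · rw [T.depth_parent v h]; omega

lemma depth_le_of_anc {v k : Fin N} (h : T.anc v k) : T.depth k ≤ T.depth v := by
  obtain ⟨m, rfl⟩ := h
  induction m with
  | zero => simp
  | succ n ih =>
      rw [Function.iterate_succ_apply']
      exact le_trans (T.depth_parent_le _) ih

lemma not_anc_parent {v : Fin N} (h : v ≠ T.root) : ¬ T.anc (T.parent v) v := by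
  intro hc
  have h1 := T.depth_le_of_anc hc
  have h2 := T.depth_parent v h
  omega

lemma anc_root_iff (k : Fin N) : T.anc T.root k ↔ k = T.root := by
  constructor
  · rintro ⟨m, rfl⟩
    induction m with
    | zero => rfl
    | succ n ih => rw [Function.iterate_succ_apply', ih, T.parent_root]
  · rintro rfl; exact T.anc_refl _

open Classical in
lemma telescope (g : Fin N → ℝ) :
    ∀ n (v : Fin N), T.depth v = n →
      g v - g T.root = ∑ k, (if T.anc v k then g k - g (T.parent k) else 0) := by
  intro n
  induction n with
  | zero =>
      intro v hv
      have hvr : v = T.root := T.root_unique v hv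
      subst hvr
      have h1 : ∀ k : Fin N, (if T.anc T.root k then g k - g (T.parent k) else 0)
          = if k = T.root then g k - g (T.parent k) else 0 :=
        fun k => if_congr (T.anc_root_iff k) rfl rfl
      rw [Finset.sum_congr rfl (fun k _ => h1 k), Finset.sum_ite_eq' Finset.univ]
      simp [T.parent_root]
  | succ n ih =>
      intro v hv
      have hvr : v ≠ T.root := by
        intro h; rw [h, T.depth_root] at hv; omega
      have hdp : T.depth (T.parent v) = n := by
        have := T.depth_parent v hvr; omega
      have key : ∀ k : Fin N, (if T.anc v k then g k - g (T.parent k) else 0)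
          = (if k = v then g k - g (T.parent k) else 0)
            + (if T.anc (T.parent v) k then g k - g (T.parent k) else 0) := by
        intro k
        have hc : (if T.anc v k then g k - g (T.parent k) else 0)
            = if k = v ∨ T.anc (T.parent v) k then g k - g (T.parent k) else 0 :=
          if_congr (T.anc_iff v k) rfl rfl
        rw [hc]
        by_cases hk : k = v
        · simp [hk, T.not_anc_parent hvr]
        · simp [hk]
      rw [Finset.sum_congr rfl (fun k _ => key k), Finset.sum_add_distrib,
        Finset.sum_ite_eq' Finset.univ, ← ih (T.parent v) hdp]
      simp only [Finset.mem_univ, ite_true]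
      ring

lemma dist_self (i : Fin N) : T.dist i i = 0 := by
  unfold WTree.dist; simp

lemma dist_comm (i j : Fin N) : T.dist i j = T.dist j i := by
  unfold WTree.dist
  exact Finset.sum_congr rfl fun k _ => if_congr or_comm rfl rfl

lemma dist_triangle (i l j : Fin N) : T.dist i j ≤ T.dist i l + T.dist l j := by
  unfold WTree.dist
  rw [← Finset.sum_add_distrib]
  apply Finset.sum_le_sum
  intro k _
  have hw := T.hw k
  by_cases h1 : T.anc i k <;> by_cases h2 : T.anc l k <;> by_cases h3 : T.anc j k <;>
    simp [h1, h2, h3] <;> linarith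

lemma dist_parent {v : Fin N} (h : v ≠ T.root) : T.dist v (T.parent v) = T.w v := by
  unfold WTree.dist
  have key : ∀ k : Fin N,
      ((T.anc v k ∧ ¬ T.anc (T.parent v) k) ∨ (T.anc (T.parent v) k ∧ ¬ T.anc v k)) ↔ k = v := by
    intro k
    constructor
    · rintro (⟨ha1, ha2⟩ | ⟨ha1, ha2⟩)
      · rcases (T.anc_iff v k).mp ha1 with hk | hk
        · exact hk
        · exact absurd hk ha2
      · exact absurd (T.anc_of_parent ha1) ha2
    · rintro rfl
      exact Or.inl ⟨T.anc_refl _, T.not_anc_parent h⟩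
  have h2 : ∀ k : Fin N,
      (if (T.anc v k ∧ ¬ T.anc (T.parent v) k) ∨ (T.anc (T.parent v) k ∧ ¬ T.anc v k)
        then T.w k else 0) = if k = v then T.w k else 0 :=
    fun k => if_congr (key k) rfl rfl
  rw [Finset.sum_congr rfl (fun k _ => h2 k), Finset.sum_ite_eq' Finset.univ]
  simp

lemma lip_extension {L : ℕ} (ℓ : Fin L → Fin N) (i₀ : Fin L) (f : Fin L → ℝ)
    (hlip : ∀ i j, |f i - f j| ≤ T.dist (ℓ i) (ℓ j)) :
    ∃ g : Fin N → ℝ, (∀ j, g (ℓ j) = f j) ∧ ∀ x y, |g x - g y| ≤ T.dist x y := by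
  have hne : (Finset.univ : Finset (Fin L)).Nonempty := ⟨i₀, Finset.mem_univ i₀⟩
  refine ⟨fun x => Finset.univ.inf' hne (fun i => f i + T.dist (ℓ i) x), ?_, ?_⟩
  · intro j
    apply le_antisymm
    · have h := Finset.inf'_le (fun i => f i + T.dist (ℓ i) (ℓ j)) (Finset.mem_univ j)
      rwa [T.dist_self, add_zero] at h
    · apply Finset.le_inf'
      intro i _
      have h1 := le_abs_self (f j - f i)
      have h2 := hlip j i
      have h3 := T.dist_comm (ℓ j) (ℓ i)
      linarith
  · have one : ∀ x y, Finset.univ.inf' hne (fun i => f i + T.dist (ℓ i) x)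
        - Finset.univ.inf' hne (fun i => f i + T.dist (ℓ i) y) ≤ T.dist x y := by
      intro x y
      obtain ⟨i, -, hi⟩ := Finset.exists_mem_eq_inf' hne (fun i => f i + T.dist (ℓ i) y)
      have h1 := Finset.inf'_le (fun i => f i + T.dist (ℓ i) x) (Finset.mem_univ i)
      have h2 := T.dist_triangle (ℓ i) y x
      have h3 := T.dist_comm y x
      rw [hi]
      linarith
    intro x y
    rw [abs_sub_le_iff]
    exact ⟨one x y, (T.dist_comm x y) ▸ one y x⟩

end WTree

/-- Duality for the tree-Wasserstein distance: ‖diag(w) B (a−b)‖₁ is the maximum of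
sᵀ diag(w) B (a−b) over sign vectors s ∈ {−1,0,1}^N, and it equals the maximum of
Σᵢ f(xᵢ)(aᵢ − bᵢ) over functions f on the leaves that are 1-Lipschitz for the tree
metric and vanish at a fixed basepoint. -/
theorem stmt13 {N L : ℕ} (T : WTree N) (ℓ : Fin L → Fin N)
    (hinj : Function.Injective ℓ) (hleaf : ∀ i, T.IsLeaf (ℓ i))
    (i₀ : Fin L) (a b : Fin L → ℝ)
    (ha : ∀ i, 0 ≤ a i) (ha1 : ∑ i, a i = 1)
    (hb : ∀ i, 0 ≤ b i) (hb1 : ∑ i, b i = 1) :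
    ∀ Bab : Fin N → ℝ, (Bab = fun k => ∑ i, T.bvec (ℓ i) k * (a i - b i)) →
      IsGreatest
        {v : ℝ | ∃ s : Fin N → ℝ, (∀ k, s k = -1 ∨ s k = 0 ∨ s k = 1) ∧
          v = ∑ k, s k * (T.w k * Bab k)}
        (∑ k, |T.w k * Bab k|) ∧
      IsGreatest
        {v : ℝ | ∃ f : Fin L → ℝ, f i₀ = 0 ∧
          (∀ i j, |f i - f j| ≤ T.dist (ℓ i) (ℓ j)) ∧
          v = ∑ i, f i * (a i - b i)}
        (∑ k, |T.w k * Bab k|) := by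
  intro Bab hBab
  have hab0 : ∑ i, (a i - b i) = 0 := by
    rw [Finset.sum_sub_distrib, ha1, hb1]; ring
  -- key sum-swapping identity
  have key : ∀ c : Fin N → ℝ,
      ∑ i, (∑ k, c k * T.bvec (ℓ i) k) * (a i - b i) = ∑ k, c k * Bab k := by
    intro c
    calc ∑ i, (∑ k, c k * T.bvec (ℓ i) k) * (a i - b i)
        = ∑ i, ∑ k, c k * (T.bvec (ℓ i) k * (a i - b i)) := by
          refine Finset.sum_congr rfl fun i _ => ?_
          rw [Finset.sum_mul]
          exact Finset.sum_congr rfl fun k _ => by ring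
      _ = ∑ k, ∑ i, c k * (T.bvec (ℓ i) k * (a i - b i)) := Finset.sum_comm
      _ = ∑ k, c k * Bab k := by
          refine Finset.sum_congr rfl fun k _ => ?_
          rw [← Finset.mul_sum, hBab]
  have key2 : ∀ c : Fin N → ℝ,
      ∑ i, (∑ k, c k * (T.bvec (ℓ i) k - T.bvec (ℓ i₀) k)) * (a i - b i)
        = ∑ k, c k * Bab k := by
    intro c
    have hsplit : ∀ i, (∑ k, c k * (T.bvec (ℓ i) k - T.bvec (ℓ i₀) k)) * (a i - b i)
        = (∑ k, c k * T.bvec (ℓ i) k) * (a i - b i)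
          - (∑ k, c k * T.bvec (ℓ i₀) k) * (a i - b i) := by
      intro i
      rw [← sub_mul, ← Finset.sum_sub_distrib]
      congr 1
      exact Finset.sum_congr rfl fun k _ => by ring
    rw [Finset.sum_congr rfl fun i _ => hsplit i, Finset.sum_sub_distrib,
      ← Finset.mul_sum, hab0, mul_zero, sub_zero, key c]
  constructor
  · -- Part 1 : sign vectors
    constructor
    · refine ⟨fun k => if T.w k * Bab k < 0 then -1 else 1, fun k => ?_, ?_⟩
      · by_cases h : T.w k * Bab k < 0 <;> simp [h]
      · refine Finset.sum_congr rfl fun k _ => ?_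
        show |T.w k * Bab k| = (if T.w k * Bab k < 0 then (-1:ℝ) else 1) * (T.w k * Bab k)
        by_cases h : T.w k * Bab k < 0
        · rw [if_pos h, abs_of_neg h]; ring
        · rw [if_neg h, abs_of_nonneg (not_lt.mp h), one_mul]
    · rintro v ⟨s, hs, rfl⟩
      refine Finset.sum_le_sum fun k _ => ?_
      calc s k * (T.w k * Bab k) ≤ |s k * (T.w k * Bab k)| := le_abs_self _
        _ = |s k| * |T.w k * Bab k| := abs_mul _ _
        _ ≤ 1 * |T.w k * Bab k| := by
            refine mul_le_mul_of_nonneg_right ?_ (abs_nonneg _)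
            rcases hs k with h | h | h <;> simp [h]
        _ = |T.w k * Bab k| := one_mul _
  · -- Part 2 : Lipschitz functions
    constructor
    · -- membership : explicit optimal f
      set s : Fin N → ℝ := fun k => if Bab k < 0 then -1 else 1 with hsdef
      have hs1 : ∀ k, |s k| = 1 := by
        intro k
        by_cases h : Bab k < 0 <;> simp [hsdef, h]
      refine ⟨fun i => ∑ k, (s k * T.w k) * (T.bvec (ℓ i) k - T.bvec (ℓ i₀) k), by simp, ?_, ?_⟩
      · intro i j
        have hdiff : (∑ k, (s k * T.w k) * (T.bvec (ℓ i) k - T.bvec (ℓ i₀) k))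
            - (∑ k, (s k * T.w k) * (T.bvec (ℓ j) k - T.bvec (ℓ i₀) k))
            = ∑ k, (s k * T.w k) * (T.bvec (ℓ i) k - T.bvec (ℓ j) k) := by
          rw [← Finset.sum_sub_distrib]
          exact Finset.sum_congr rfl fun k _ => by ring
        rw [hdiff]
        refine le_trans (Finset.abs_sum_le_sum_abs _ _) ?_
        unfold WTree.dist
        refine Finset.sum_le_sum fun k _ => ?_
        rw [abs_mul, abs_mul, hs1 k, one_mul, abs_of_nonneg (T.hw k)]
        unfold WTree.bvec
        have hw := T.hw k
        by_cases h1 : T.anc (ℓ i) k <;> by_cases h2 : T.anc (ℓ j) k <;>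
          simp [h1, h2] <;> linarith
      · rw [key2 (fun k => s k * T.w k)]
        refine Finset.sum_congr rfl fun k _ => ?_
        have hw := T.hw k
        by_cases h : Bab k < 0
        · have : T.w k * Bab k ≤ 0 := mul_nonpos_of_nonneg_of_nonpos hw h.le
          rw [abs_of_nonpos this]
          simp [hsdef, h]
        · have : 0 ≤ T.w k * Bab k := mul_nonneg hw (not_lt.mp h)
          rw [abs_of_nonneg this]
          simp [hsdef, h]
    · -- upper bound
      rintro v ⟨f, hf0, hlip, rfl⟩
      obtain ⟨g, hgl, hglip⟩ := T.lip_extension ℓ i₀ f hlip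
      have e1 : ∑ i, f i * (a i - b i) = ∑ i, (g (ℓ i) - g T.root) * (a i - b i) := by
        have h : ∀ i, (g (ℓ i) - g T.root) * (a i - b i)
            = f i * (a i - b i) - g T.root * (a i - b i) := by
          intro i; rw [hgl i]; ring
        rw [Finset.sum_congr rfl fun i _ => h i, Finset.sum_sub_distrib,
          ← Finset.mul_sum, hab0, mul_zero, sub_zero]
      have e2 : ∀ x : Fin N, g x - g T.root
          = ∑ k, (g k - g (T.parent k)) * T.bvec x k := by
        intro x
        rw [T.telescope g (T.depth x) x rfl]
        refine Finset.sum_congr rfl fun k _ => ?_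
        unfold WTree.bvec
        by_cases h : T.anc x k <;> simp [h]
      rw [e1, Finset.sum_congr rfl fun i _ => by rw [e2 (ℓ i)],
        key (fun k => g k - g (T.parent k))]
      refine Finset.sum_le_sum fun k _ => ?_
      have hck : |g k - g (T.parent k)| ≤ T.w k := by
        by_cases h : k = T.root
        · subst h
          rw [T.parent_root]
          simpa using T.hw T.root
        · rw [← T.dist_parent h]
          exact hglip k (T.parent k)
      calc (g k - g (T.parent k)) * Bab k ≤ |(g k - g (T.parent k)) * Bab k| := le_abs_self _
        _ = |g k - g (T.parent k)| * |Bab k| := abs_mul _ _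
        _ ≤ T.w k * |Bab k| := mul_le_mul_of_nonneg_right hck (abs_nonneg _)
        _ = |T.w k * Bab k| := by rw [abs_mul, abs_of_nonneg (T.hw k)]
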